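/- The subgroup of GL(2,ℤ) generated by A = [[2,-1],[1,0]] and B = [[0,1],[1,0]] is isomorphic to the infinite dihedral group D_∞. -/

import Mathlib

/-- `A = !![2,-1;1,0]` as an element of `GL(2,ℤ)`. -/
def Aunit : Matrix.GeneralLinearGroup (Fin 2) ℤ :=
  ⟨!![2, -1; 1, 0], !![0, 1; -1, 2],
    by simp [Matrix.mul_fin_two, Matrix.one_fin_two],
    by simp [Matrix.mul_fin_two, Matrix.one_fin_two]⟩

/-- `B = !![0,1;1,0]` as an element of `GL(2,ℤ)`. -/
def Bunit : Matrix.GeneralLinearGroup (Fin 2) ℤ :=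
  ⟨!![0, 1; 1, 0], !![0, 1; 1, 0],
    by simp [Matrix.mul_fin_two, Matrix.one_fin_two],
    by simp [Matrix.mul_fin_two, Matrix.one_fin_two]⟩

lemma B_sq : Bunit * Bunit = 1 := by
  ext : 1
  show (Bunit : Matrix (Fin 2) (Fin 2) ℤ) * (Bunit : Matrix (Fin 2) (Fin 2) ℤ) = 1
  simp [Aunit, Bunit, Matrix.mul_fin_two, Matrix.one_fin_two]

lemma B_inv : Bunit⁻¹ = Bunit := by
  ext : 1
  rfl

lemma BAB : Bunit * Aunit * Bunit⁻¹ = Aunit⁻¹ := by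
  ext : 1
  show (Bunit : Matrix (Fin 2) (Fin 2) ℤ) * (Aunit : Matrix (Fin 2) (Fin 2) ℤ) *
    ((Bunit⁻¹ : _) : Matrix (Fin 2) (Fin 2) ℤ) = _
  rw [B_inv]
  show (!![0,1;1,0] : Matrix (Fin 2) (Fin 2) ℤ) * !![2,-1;1,0] * !![0,1;1,0] = !![0,1;-1,2]
  simp [Matrix.mul_fin_two]

lemma conjA_zpow (i : ℤ) : Bunit * Aunit ^ i * Bunit = Aunit ^ (-i) := by
  have := conj_zpow (i := i) (a := Bunit) (b := Aunit)
  rw [B_inv] at this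
  rw [← this, show Bunit * Aunit * Bunit = Aunit⁻¹ from by rw [← B_inv]; exact BAB,
    inv_zpow, zpow_neg]

lemma A_comm_B (i : ℤ) : Aunit ^ i * Bunit = Bunit * Aunit ^ (-i) := by
  have h := conjA_zpow (-i)
  rw [neg_neg] at h
  calc Aunit ^ i * Bunit = Bunit * (Bunit * Aunit ^ i * Bunit) := by
        rw [← mul_assoc, ← mul_assoc, B_sq, one_mul]
    _ = Bunit * Aunit ^ (-i) := by rw [conjA_zpow]

/-- The homomorphism `D∞ → GL(2,ℤ)`. -/
def phi : DihedralGroup 0 →* Matrix.GeneralLinearGroup (Fin 2) ℤ :=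
  MonoidHom.mk' (fun x => match x with
    | .r i => Aunit ^ (show ℤ from i)
    | .sr i => Bunit * Aunit ^ (show ℤ from i))
    (by
      rintro (i | i) (j | j) <;>
        simp only [DihedralGroup.r_mul_r, DihedralGroup.r_mul_sr,
          DihedralGroup.sr_mul_r, DihedralGroup.sr_mul_sr]
      · show Aunit ^ (show ℤ from i + j) = Aunit ^ (show ℤ from i) * Aunit ^ (show ℤ from j)
        exact zpow_add Aunit (show ℤ from i) (show ℤ from j)
      · show Bunit * Aunit ^ (show ℤ from j - i) = Aunit ^ (show ℤ from i) * (Bunit * Aunit ^ (show ℤ from j))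
        rw [← mul_assoc, A_comm_B, mul_assoc, ← zpow_add]
        ring_nf
        exact congrArg (fun k : ℤ => Bunit * Aunit ^ k)
          (congrArg₂ HSub.hSub (pow_one _).symm (pow_one _).symm)
      · show Bunit * Aunit ^ (show ℤ from i + j) = Bunit * Aunit ^ (show ℤ from i) * Aunit ^ (show ℤ from j)
        rw [mul_assoc, ← zpow_add]
        rfl
      · show Aunit ^ (show ℤ from j - i) = Bunit * Aunit ^ (show ℤ from i) * (Bunit * Aunit ^ (show ℤ from j))
        rw [mul_assoc, ← mul_assoc (Aunit ^ (show ℤ from i)), A_comm_B, ← mul_assoc, ← mul_assoc,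
          B_sq, one_mul, ← zpow_add]
        ring_nf
        exact congrArg (fun k : ℤ => Aunit ^ k)
          (congrArg₂ HSub.hSub (pow_one _).symm (pow_one _).symm))

lemma Aunit_zpow (i : ℤ) : ((Aunit ^ i : Matrix.GeneralLinearGroup (Fin 2) ℤ) :
    Matrix (Fin 2) (Fin 2) ℤ) = !![i+1, -i; i, 1-i] := by
  induction i using Int.induction_on with
  | zero => simp [Matrix.one_fin_two]
  | succ n ih =>
      rw [zpow_add_one, Units.val_mul, ih]
      show _ * (!![2,-1;1,0] : Matrix (Fin 2) (Fin 2) ℤ) = _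
      rw [Matrix.mul_fin_two]
      congr 1 <;> push_cast <;> ring
  | pred n ih =>
      rw [zpow_sub_one, Units.val_mul, ih]
      show _ * (!![0,1;-1,2] : Matrix (Fin 2) (Fin 2) ℤ) = _
      rw [Matrix.mul_fin_two]
      congr 1 <;> push_cast <;> ring

lemma phi_inj : Function.Injective phi := by
  rw [injective_iff_map_eq_one]
  rintro (i | i) h
  · have h1 : ((Aunit ^ (show ℤ from i) : Matrix.GeneralLinearGroup (Fin 2) ℤ) :
        Matrix (Fin 2) (Fin 2) ℤ) = 1 := by
      rw [show (Aunit ^ (show ℤ from i)) = phi (.r i) from rfl, h]; rfl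
    rw [Aunit_zpow, Matrix.one_fin_two] at h1
    have : (show ℤ from i) = 0 := by
      have := congrFun (congrFun h1 1) 0
      simpa using this
    show _ = DihedralGroup.r 0
    rw [show (i : ZMod 0) = (0 : ZMod 0) from this]
  · exfalso
    have h1 : ((Bunit * Aunit ^ (show ℤ from i) : Matrix.GeneralLinearGroup (Fin 2) ℤ) :
        Matrix (Fin 2) (Fin 2) ℤ) = 1 := by
      rw [show (Bunit * Aunit ^ (show ℤ from i)) = phi (.sr i) from rfl, h]; rfl
    have hdet := congrArg Matrix.det h1
    rw [Units.val_mul, Matrix.det_mul, Aunit_zpow] at hdet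
    simp [Bunit, Matrix.det_fin_two_of] at hdet
    have key : ∀ k : ℤ, -((k+1)*(1-k) - (-k)*k) ≠ 1 := fun k => by ring_nf; omega
    exact key i ((congrArg Neg.neg (Matrix.det_fin_two_of _ _ _ _)).symm.trans hdet)

lemma phi_range : phi.range = Subgroup.closure {Aunit, Bunit} := by
  apply le_antisymm
  · rintro x ⟨(i | i), rfl⟩
    · exact Subgroup.zpow_mem _ (Subgroup.subset_closure (by simp)) _
    · exact Subgroup.mul_mem _ (Subgroup.subset_closure (by simp))
        (Subgroup.zpow_mem _ (Subgroup.subset_closure (by simp)) _)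
  · rw [Subgroup.closure_le]
    rintro x (rfl | rfl)
    · exact ⟨.r 1, zpow_one Aunit⟩
    · exact ⟨.sr 0, by show Bunit * Aunit ^ (0:ℤ) = Bunit; rw [zpow_zero, mul_one]⟩

/-- The subgroup of `GL(2,ℤ)` generated by `A = !![2,-1;1,0]` and `B = !![0,1;1,0]`
is isomorphic to the infinite dihedral group `D_∞` (Mathlib's `DihedralGroup 0`). -/
theorem stmt5 :
    Nonempty ((Subgroup.closure {Aunit, Bunit} : Subgroup (Matrix.GeneralLinearGroup (Fin 2) ℤ))
      ≃* DihedralGroup 0) := by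
  exact ⟨(MulEquiv.subgroupCongr phi_range.symm).trans (MonoidHom.ofInjective phi_inj).symm⟩
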